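/- arXiv:2409.15737 — 2 statements merged into one kernel-verified Lean document; each statement's English description precedes it below -/
import Mathlib

section
/- Let T > 0, let u : [0,T] → ℝ be continuous, and let x : [0,T] × [−1,1] → ℝ be continuous, differentiable in t with jointly continuous derivative ∂_t x, and satisfying ∂_t x(t,β) = β·x(t,β) + u(t) for all t ∈ [0,T] and β ∈ [−1,1]. For k ∈ ℕ define the k-th moment m_k(t) = ∫_{−1}^{1} T_k(β)·x(t,β) dβ. Then each m_k is differentiable on [0,T], and for every k ≥ 1, m_k′(t) = (1/2)(m_{k−1}(t) + m_{k+1}(t)) + b_k·u(t), where b_k = ∫_{−1}^{1} T_k(β) dβ; moreover m_0′(t) = m_1(t) + 2u(t). -/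
open Set Polynomial MeasureTheory intervalIntegral

/-- Chebyshev moment dynamics of the parameterized scalar linear system
`∂_t x(t,β) = β x(t,β) + u(t)`, `β ∈ [−1,1]`. With `m_k(t) = ∫_{−1}^1 T_k(β) x(t,β) dβ`
and `b_k = ∫_{−1}^1 T_k(β) dβ`, each `m_k` is differentiable on `[0,T]`, with
`m_k′(t) = (1/2)(m_{k−1}(t) + m_{k+1}(t)) + b_k u(t)` for `k ≥ 1`, and
`m_0′(t) = m_1(t) + 2 u(t)`. -/
theorem stmt_9 (T : ℝ) (hT : 0 < T) (u : ℝ → ℝ) (hu : ContinuousOn u (Set.Icc 0 T))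
    (x : ℝ → ℝ → ℝ)
    (hxcont : ContinuousOn (fun p : ℝ × ℝ => x p.1 p.2)
      (Set.Icc 0 T ×ˢ Set.Icc (-1 : ℝ) 1))
    (hode : ∀ β ∈ Set.Icc (-1 : ℝ) 1, ∀ t ∈ Set.Icc (0 : ℝ) T,
      HasDerivWithinAt (fun s => x s β) (β * x t β + u t) (Set.Icc 0 T) t)
    (m : ℕ → ℝ → ℝ) (b : ℕ → ℝ)
    (hm : ∀ (k : ℕ) (t : ℝ),
      m k t = ∫ β in (-1 : ℝ)..1, (Polynomial.Chebyshev.T ℝ (k : ℤ)).eval β * x t β)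
    (hb : ∀ k : ℕ, b k = ∫ β in (-1 : ℝ)..1, (Polynomial.Chebyshev.T ℝ (k : ℤ)).eval β) :
    (∀ k : ℕ, DifferentiableOn ℝ (m k) (Set.Icc 0 T)) ∧
    (∀ t ∈ Set.Icc (0 : ℝ) T,
      (∀ k : ℕ, 1 ≤ k →
        HasDerivWithinAt (m k) ((1 / 2) * (m (k - 1) t + m (k + 1) t) + b k * u t)
          (Set.Icc 0 T) t) ∧
      HasDerivWithinAt (m 0) (m 1 t + 2 * u t) (Set.Icc 0 T) t) := by
  set K := Set.Icc (0:ℝ) T with hKdef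
  set J := Set.Icc (-1:ℝ) 1 with hJdef
  set g : ℝ → ℝ → ℝ := fun s β => β * x s β + u s with hgdef
  have hgcont : ContinuousOn (fun p : ℝ × ℝ => g p.1 p.2) (K ×ˢ J) := by
    apply ContinuousOn.add
    · exact continuous_snd.continuousOn.mul hxcont
    · exact hu.comp continuous_fst.continuousOn (fun p hp => hp.1)
  have hxcont_t : ∀ β ∈ J, ContinuousOn (fun s => x s β) K := by
    intro β hβ
    exact hxcont.comp (by fun_prop) (fun s hs => Set.mk_mem_prod hs hβ)
  have hxcont_b : ∀ t ∈ K, ContinuousOn (x t) J := by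
    intro t ht
    exact hxcont.comp (by fun_prop) (fun β hβ => Set.mk_mem_prod ht hβ)
  have hgcont_t : ∀ β ∈ J, ContinuousOn (fun s => g s β) K := by
    intro β hβ
    exact hgcont.comp (by fun_prop) (fun s hs => Set.mk_mem_prod hs hβ)
  have hgcont_b : ∀ t ∈ K, ContinuousOn (fun β => g t β) J := by
    intro t ht
    exact hgcont.comp (by fun_prop) (fun β hβ => Set.mk_mem_prod ht hβ)
  -- generic integrability of (poly) * x t · over [-1,1]
  have hii : ∀ t ∈ K, ∀ p : ℝ[X],
      IntervalIntegrable (fun β => p.eval β * x t β) volume (-1) 1 := by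
    intro t ht p
    apply ContinuousOn.intervalIntegrable
    rw [Set.uIcc_of_le (by norm_num : (-1:ℝ) ≤ 1)]
    exact p.continuousOn.mul (hxcont_b t ht)
  -- FTC-2 per β
  have hFTC2 : ∀ β ∈ J, ∀ t ∈ K, (∫ s in (0:ℝ)..t, g s β) = x t β - x 0 β := by
    intro β hβ t ht
    apply integral_eq_sub_of_hasDeriv_right_of_le ht.1
    · exact (hxcont_t β hβ).mono (Set.Icc_subset_Icc le_rfl ht.2)
    · intro s hs
      have hsK : s ∈ K := ⟨hs.1.le, hs.2.le.trans ht.2⟩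
      have h1 := hode β hβ s hsK
      have h2 : HasDerivAt (fun s' => x s' β) (g s β) s :=
        h1.hasDerivAt (Icc_mem_nhds hs.1 (lt_of_lt_of_le hs.2 ht.2))
      exact h2.hasDerivWithinAt
    · apply ContinuousOn.intervalIntegrable
      rw [Set.uIcc_of_le ht.1]
      exact (hgcont_t β hβ).mono (Set.Icc_subset_Icc le_rfl ht.2)
  -- F k s = ∫ β, T_k β * g s β
  set F : ℕ → ℝ → ℝ :=
    fun k s => ∫ β in (-1:ℝ)..1, (Polynomial.Chebyshev.T ℝ (k : ℤ)).eval β * g s β with hFdef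
  -- continuity of F k on K
  have hFcont : ∀ k, ContinuousOn (F k) K := by
    intro k
    obtain ⟨C, hC⟩ := (isCompact_Icc.prod isCompact_Icc :
        IsCompact (K ×ˢ J)).exists_bound_of_continuousOn
      (((Polynomial.Chebyshev.T ℝ (k : ℤ)).continuous.comp continuous_snd).continuousOn.mul hgcont)
    intro t ht
    apply continuousWithinAt_of_dominated_interval (bound := fun _ => C)
    · filter_upwards [self_mem_nhdsWithin] with s hs
      apply ContinuousOn.aestronglyMeasurable _ measurableSet_uIoc
      have : Set.uIoc (-1:ℝ) 1 ⊆ J := by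
        rw [Set.uIoc_of_le (by norm_num : (-1:ℝ) ≤ 1)]; exact Set.Ioc_subset_Icc_self
      exact (((Polynomial.Chebyshev.T ℝ (k : ℤ)).continuousOn.mul (hgcont_b s hs)).mono this)
    · filter_upwards [self_mem_nhdsWithin] with s hs
      filter_upwards with β hβ
      have hβJ : β ∈ J := by
        rw [Set.uIoc_of_le (by norm_num : (-1:ℝ) ≤ 1)] at hβ
        exact Set.Ioc_subset_Icc_self hβ
      exact hC (s, β) (Set.mk_mem_prod hs hβJ)
    · exact intervalIntegrable_const
    · filter_upwards with β hβ
      have hβJ : β ∈ J := by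
        rw [Set.uIoc_of_le (by norm_num : (-1:ℝ) ≤ 1)] at hβ
        exact Set.Ioc_subset_Icc_self hβ
      exact continuousWithinAt_const.mul ((hgcont_t β hβJ) t ht)
  -- Fubini
  have hswap : ∀ k : ℕ, ∀ t ∈ K,
      (∫ β in (-1:ℝ)..1, ∫ s in (0:ℝ)..t, (Polynomial.Chebyshev.T ℝ (k : ℤ)).eval β * g s β)
        = ∫ s in (0:ℝ)..t, F k s := by
    intro k t ht
    have h1 : IntegrableOn
        (fun p : ℝ × ℝ => (Polynomial.Chebyshev.T ℝ (k : ℤ)).eval p.1 * g p.2 p.1)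
        (Set.Ioc (-1:ℝ) 1 ×ˢ Set.Ioc (0:ℝ) t) (volume.prod volume) := by
      apply IntegrableOn.mono_set _
        (Set.prod_mono Set.Ioc_subset_Icc_self Set.Ioc_subset_Icc_self)
      apply ContinuousOn.integrableOn_compact (isCompact_Icc.prod isCompact_Icc)
      apply ContinuousOn.mul
      · exact ((Polynomial.Chebyshev.T ℝ (k : ℤ)).continuous.comp continuous_fst).continuousOn
      · refine hgcont.comp (f := fun p : ℝ × ℝ => (p.2, p.1))
          (continuous_snd.prodMk continuous_fst).continuousOn ?_
        intro p hp
        exact Set.mk_mem_prod (Set.Icc_subset_Icc le_rfl ht.2 hp.2) hp.1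
    have h2 : Integrable
        (Function.uncurry fun β s => (Polynomial.Chebyshev.T ℝ (k : ℤ)).eval β * g s β)
        ((volume.restrict (Set.Ioc (-1:ℝ) 1)).prod (volume.restrict (Set.Ioc (0:ℝ) t))) := by
      rw [Measure.prod_restrict]
      exact h1
    have := MeasureTheory.integral_integral_swap h2
    simp only [hFdef]
    rw [intervalIntegral.integral_of_le (by norm_num : (-1:ℝ) ≤ 1),
        intervalIntegral.integral_of_le ht.1]
    simp only [intervalIntegral.integral_of_le (by norm_num : (-1:ℝ) ≤ 1),
        intervalIntegral.integral_of_le ht.1]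
    exact this
  -- key representation
  have hkey : ∀ k : ℕ, ∀ t ∈ K, m k t = m k 0 + ∫ s in (0:ℝ)..t, F k s := by
    intro k t ht
    have h0K : (0:ℝ) ∈ K := Set.left_mem_Icc.2 hT.le
    have e1 : m k t - m k 0
        = ∫ β in (-1:ℝ)..1, (Polynomial.Chebyshev.T ℝ (k : ℤ)).eval β * (x t β - x 0 β) := by
      rw [hm, hm, ← intervalIntegral.integral_sub (hii t ht _) (hii 0 h0K _)]
      simp only [mul_sub]
    have e2 : (∫ β in (-1:ℝ)..1, (Polynomial.Chebyshev.T ℝ (k : ℤ)).eval β * (x t β - x 0 β))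
        = ∫ β in (-1:ℝ)..1, (Polynomial.Chebyshev.T ℝ (k : ℤ)).eval β
            * ∫ s in (0:ℝ)..t, g s β := by
      apply intervalIntegral.integral_congr
      intro β hβ
      rw [Set.uIcc_of_le (by norm_num : (-1:ℝ) ≤ 1)] at hβ
      dsimp only
      rw [hFTC2 β hβ t ht]
    have e3 : (∫ β in (-1:ℝ)..1, (Polynomial.Chebyshev.T ℝ (k : ℤ)).eval β
            * ∫ s in (0:ℝ)..t, g s β)
        = ∫ β in (-1:ℝ)..1, ∫ s in (0:ℝ)..t,
            (Polynomial.Chebyshev.T ℝ (k : ℤ)).eval β * g s β := by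
      simp only [intervalIntegral.integral_const_mul]
    have := hswap k t ht
    linarith [e1, e2, e3, this]
  -- derivative of m k is F k t
  have hderivF : ∀ k : ℕ, ∀ t ∈ K, HasDerivWithinAt (m k) (F k t) K t := by
    intro k t ht
    haveI : Fact (t ∈ Set.Icc (0:ℝ) T) := ⟨ht⟩
    have h1 : IntervalIntegrable (F k) volume 0 t := by
      apply ContinuousOn.intervalIntegrable
      rw [Set.uIcc_of_le ht.1]
      exact (hFcont k).mono (Set.Icc_subset_Icc le_rfl ht.2)
    have h2 : StronglyMeasurableAtFilter (F k) (nhdsWithin t (Set.Icc (0:ℝ) T)) volume :=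
      ⟨K, self_mem_nhdsWithin, ((hFcont k).aestronglyMeasurable measurableSet_Icc)⟩
    have h3 := intervalIntegral.integral_hasDerivWithinAt_right (s := Set.Icc (0:ℝ) T)
      (t := Set.Icc (0:ℝ) T) h1 h2 ((hFcont k) t ht)
    have h4 := h3.const_add (m k 0)
    exact h4.congr (fun s hs => hkey k s hs) (hkey k t ht)
  -- value of F 0 t
  have hF0 : ∀ t ∈ K, F 0 t = m 1 t + 2 * u t := by
    intro t ht
    have hint1 : IntervalIntegrable (fun β => β * x t β) volume (-1) 1 := by
      have := hii t ht Polynomial.X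
      simpa using this
    have : F 0 t = ∫ β in (-1:ℝ)..1, (β * x t β + u t) := by
      simp [hFdef, hgdef, Polynomial.Chebyshev.T_zero]
    rw [this, intervalIntegral.integral_add hint1 intervalIntegrable_const,
        intervalIntegral.integral_const, hm 1 t]
    have : (Polynomial.Chebyshev.T ℝ ((1:ℕ) : ℤ)) = Polynomial.X := by
      norm_num [Polynomial.Chebyshev.T_one]
    rw [this]
    simp only [Polynomial.eval_X, smul_eq_mul]
    norm_num
  -- value of F k t for k ≥ 1
  have hFk : ∀ k : ℕ, 1 ≤ k → ∀ t ∈ K,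
      F k t = (1 / 2) * (m (k - 1) t + m (k + 1) t) + b k * u t := by
    intro k hk t ht
    obtain ⟨j, rfl⟩ : ∃ j, k = j + 1 := ⟨k - 1, (Nat.succ_pred_eq_of_pos hk).symm⟩
    have hcheb : ∀ β : ℝ, β * (Polynomial.Chebyshev.T ℝ ((j+1 : ℕ) : ℤ)).eval β
        = ((Polynomial.Chebyshev.T ℝ ((j : ℕ) : ℤ)).eval β
          + (Polynomial.Chebyshev.T ℝ ((j+2 : ℕ) : ℤ)).eval β) / 2 := by
      intro β
      have h := Polynomial.Chebyshev.T_add_two ℝ (j : ℤ)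
      have h2 : ((j+2 : ℕ) : ℤ) = (j : ℤ) + 2 := by push_cast; ring
      have h1 : ((j+1 : ℕ) : ℤ) = (j : ℤ) + 1 := by push_cast; ring
      rw [h2, h1, h]
      simp [Polynomial.eval_sub, Polynomial.eval_mul]
      ring
    have e1 : F (j+1) t = ∫ β in (-1:ℝ)..1,
        ((1/2) * ((Polynomial.Chebyshev.T ℝ ((j : ℕ) : ℤ)).eval β * x t β
          + (Polynomial.Chebyshev.T ℝ ((j+2 : ℕ) : ℤ)).eval β * x t β)
        + (Polynomial.Chebyshev.T ℝ ((j+1 : ℕ) : ℤ)).eval β * u t) := by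
      simp only [hFdef]
      apply intervalIntegral.integral_congr
      intro β _
      have := hcheb β
      simp only [hgdef]
      linear_combination x t β * this
    rw [e1]
    have hint1 : IntervalIntegrable
        (fun β => (1/2) * ((Polynomial.Chebyshev.T ℝ ((j : ℕ) : ℤ)).eval β * x t β
          + (Polynomial.Chebyshev.T ℝ ((j+2 : ℕ) : ℤ)).eval β * x t β)) volume (-1) 1 :=
      (((hii t ht _).add (hii t ht _)).const_mul _)
    have hint2 : IntervalIntegrable
        (fun β => (Polynomial.Chebyshev.T ℝ ((j+1 : ℕ) : ℤ)).eval β * u t) volume (-1) 1 := by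
      apply ContinuousOn.intervalIntegrable
      exact (Polynomial.continuousOn _).mul continuousOn_const
    rw [intervalIntegral.integral_add hint1 hint2,
        intervalIntegral.integral_const_mul,
        intervalIntegral.integral_add (hii t ht _) (hii t ht _),
        intervalIntegral.integral_mul_const]
    have hidx1 : j + 1 - 1 = j := rfl
    have hidx2 : j + 1 + 1 = j + 2 := rfl
    rw [hidx1, hidx2, hm j, hm (j+2), hb (j+1)]
  refine ⟨fun k => fun t ht => (hderivF k t ht).differentiableWithinAt, fun t ht => ⟨?_, ?_⟩⟩
  · intro k hk
    have := hderivF k t ht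
    rwa [hFk k hk t ht] at this
  · have := hderivF 0 t ht
    rwa [hF0 t ht] at this
end

section
/- Let Ω_x be the 3×3 real matrix with (2,3)-entry 1, (3,2)-entry −1, and all other entries 0, and let Ω_y be the 3×3 real matrix with (1,3)-entry −1, (3,1)-entry 1, and all other entries 0. Let 0 < δ < 1, T > 0, let u, v : [0,T] → ℝ be continuous, and let x : [0,T] × [1−δ, 1+δ] → ℝ³ be continuous, differentiable in t with jointly continuous derivative ∂_t x, and satisfying the Bloch equation ∂_t x(t,β) = β·(u(t)·Ω_y + v(t)·Ω_x)·x(t,β) for all t ∈ [0,T] and β ∈ [1−δ, 1+δ]. For k ∈ ℕ define the k-th moment m_k(t) = δ·∫_{−1}^{1} T_k(η)·x(t, 1+δη) dη ∈ ℝ³. Then each m_k is differentiable on [0,T], and for every k ≥ 1, m_k′(t) = (u(t)·Ω_y + v(t)·Ω_x)·( (δ/2)(m_{k−1}(t) + m_{k+1}(t)) + m_k(t) ). -/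
open Set Polynomial Matrix

lemma cheb_aux (k : ℕ) (hk : 1 ≤ k) (a η : ℝ) :
    (1 + a * η) * (Polynomial.Chebyshev.T ℝ (k : ℤ)).eval η
      = (Polynomial.Chebyshev.T ℝ (k : ℤ)).eval η
        + (a / 2) * ((Polynomial.Chebyshev.T ℝ ((k + 1 : ℕ) : ℤ)).eval η
          + (Polynomial.Chebyshev.T ℝ ((k - 1 : ℕ) : ℤ)).eval η) := by
  obtain ⟨n, rfl⟩ := Nat.exists_eq_add_of_le hk
  have h := congrArg (Polynomial.eval η) (Polynomial.Chebyshev.T_add_two ℝ (n : ℤ))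
  simp only [Polynomial.eval_sub, Polynomial.eval_mul, Polynomial.eval_ofNat,
    Polynomial.eval_X, Polynomial.eval_add] at h
  have e1 : ((1 + n + 1 : ℕ) : ℤ) = (n : ℤ) + 2 := by push_cast; ring
  have e2 : ((1 + n - 1 : ℕ) : ℤ) = (n : ℤ) := by omega
  have e3 : ((1 + n : ℕ) : ℤ) = (n : ℤ) + 1 := by push_cast; ring
  rw [e1, e2, e3]
  linear_combination (-a / 2) * h

/-- Fubini for interval integrals of a jointly continuous function. -/
lemma fubini_aux {E : Type*} [NormedAddCommGroup E] [NormedSpace ℝ E] [CompleteSpace E]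
    (K : ℝ → ℝ → E) (hK : Continuous fun p : ℝ × ℝ => K p.1 p.2)
    (a b c d : ℝ) (hab : a ≤ b) (hcd : c ≤ d) :
    ∫ η in a..b, ∫ s in c..d, K η s = ∫ s in c..d, ∫ η in a..b, K η s := by
  simp only [intervalIntegral.integral_of_le hab, intervalIntegral.integral_of_le hcd]
  apply MeasureTheory.integral_integral_swap
  rw [MeasureTheory.Measure.prod_restrict, ← MeasureTheory.Measure.volume_eq_prod]
  exact (ContinuousOn.integrableOn_compact (isCompact_Icc.prod isCompact_Icc)
    hK.continuousOn).mono_set (Set.prod_mono Ioc_subset_Icc_self Ioc_subset_Icc_self)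

/-- Chebyshev moment dynamics of the parameterized Bloch equation
`∂_t x(t,β) = β (u(t) Ω_y + v(t) Ω_x) x(t,β)`, `β ∈ [1−δ, 1+δ]`. With the rescaled moments
`m_k(t) = δ ∫_{−1}^1 T_k(η) x(t, 1+δη) dη`, each `m_k` is differentiable on `[0,T]` and,
for `k ≥ 1`, `m_k′(t) = (u(t) Ω_y + v(t) Ω_x) ((δ/2)(m_{k−1}(t) + m_{k+1}(t)) + m_k(t))`. -/
theorem stmt_10 (Ox Oy : Matrix (Fin 3) (Fin 3) ℝ)
    (hOx : Ox = !![0, 0, 0; 0, 0, 1; 0, -1, 0])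
    (hOy : Oy = !![0, 0, -1; 0, 0, 0; 1, 0, 0])
    (δ : ℝ) (hδ0 : 0 < δ) (hδ1 : δ < 1) (T : ℝ) (hT : 0 < T)
    (u v : ℝ → ℝ) (hu : ContinuousOn u (Set.Icc 0 T)) (hv : ContinuousOn v (Set.Icc 0 T))
    (x : ℝ → ℝ → Fin 3 → ℝ)
    (hxcont : ContinuousOn (fun p : ℝ × ℝ => x p.1 p.2)
      (Set.Icc 0 T ×ˢ Set.Icc (1 - δ) (1 + δ)))
    (hode : ∀ β ∈ Set.Icc (1 - δ) (1 + δ), ∀ t ∈ Set.Icc (0 : ℝ) T,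
      HasDerivWithinAt (fun s => x s β)
        (β • ((u t • Oy + v t • Ox) *ᵥ x t β)) (Set.Icc 0 T) t)
    (m : ℕ → ℝ → Fin 3 → ℝ)
    (hm : ∀ (k : ℕ) (t : ℝ),
      m k t = δ • ∫ η in (-1 : ℝ)..1,
        (Polynomial.Chebyshev.T ℝ (k : ℤ)).eval η • x t (1 + δ * η)) :
    (∀ k : ℕ, DifferentiableOn ℝ (m k) (Set.Icc 0 T)) ∧
    (∀ t ∈ Set.Icc (0 : ℝ) T, ∀ k : ℕ, 1 ≤ k →
      HasDerivWithinAt (m k)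
        ((u t • Oy + v t • Ox) *ᵥ ((δ / 2) • (m (k - 1) t + m (k + 1) t) + m k t))
        (Set.Icc 0 T) t) := by
  classical
  -- Tietze extensions of `x`, `u`, `v`
  have hsclosed : IsClosed (Set.Icc (0:ℝ) T ×ˢ Set.Icc (1 - δ) (1 + δ)) :=
    isClosed_Icc.prod isClosed_Icc
  obtain ⟨X, hX⟩ := ContinuousMap.exists_restrict_eq (Y := Fin 3 → ℝ) hsclosed
    ⟨_, hxcont.restrict⟩
  obtain ⟨U, hU⟩ := ContinuousMap.exists_restrict_eq (Y := ℝ)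
    (isClosed_Icc (a := (0:ℝ)) (b := T)) ⟨_, hu.restrict⟩
  obtain ⟨V, hV⟩ := ContinuousMap.exists_restrict_eq (Y := ℝ)
    (isClosed_Icc (a := (0:ℝ)) (b := T)) ⟨_, hv.restrict⟩
  have hXeq : ∀ t ∈ Icc (0:ℝ) T, ∀ β ∈ Icc (1-δ) (1+δ), X (t, β) = x t β := by
    intro t ht β hβ
    have := congrFun (congrArg DFunLike.coe hX) ⟨(t, β), ⟨ht, hβ⟩⟩
    simpa using this
  have hUeq : ∀ t ∈ Icc (0:ℝ) T, U t = u t := by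
    intro t ht
    have := congrFun (congrArg DFunLike.coe hU) ⟨t, ht⟩
    simpa using this
  have hVeq : ∀ t ∈ Icc (0:ℝ) T, V t = v t := by
    intro t ht
    have := congrFun (congrArg DFunLike.coe hV) ⟨t, ht⟩
    simpa using this
  -- definitions
  obtain ⟨A, hA_def⟩ : ∃ A : ℝ → Matrix (Fin 3) (Fin 3) ℝ,
      A = fun s => U s • Oy + V s • Ox := ⟨_, rfl⟩
  obtain ⟨w, hw_def⟩ : ∃ w : ℝ → ℝ → Fin 3 → ℝ,
      w = fun s η => X (s, 1 + δ * η) := ⟨_, rfl⟩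
  obtain ⟨c, hc_def⟩ : ∃ c : ℕ → ℝ → ℝ,
      c = fun (k : ℕ) η => (Polynomial.Chebyshev.T ℝ (k : ℤ)).eval η := ⟨_, rfl⟩
  obtain ⟨G, hG_def⟩ : ∃ G : ℝ → ℝ → Fin 3 → ℝ,
      G = fun s η => (1 + δ * η) • (A s *ᵥ w s η) := ⟨_, rfl⟩
  obtain ⟨Φ, hΦ_def⟩ : ∃ Φ : ℕ → ℝ → Fin 3 → ℝ,
      Φ = fun k s => δ • ∫ η in (-1:ℝ)..1, c k η • G s η := ⟨_, rfl⟩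
  -- continuity facts
  have hwcont : Continuous (fun p : ℝ × ℝ => w p.1 p.2) := by
    rw [hw_def]
    exact X.continuous.comp (continuous_fst.prodMk
      (continuous_const.add (continuous_const.mul continuous_snd)))
  have hAcont : Continuous A := by
    rw [hA_def]
    exact (U.continuous.smul continuous_const).add (V.continuous.smul continuous_const)
  have hGcont : Continuous (fun p : ℝ × ℝ => G p.1 p.2) := by
    rw [hG_def]
    exact (continuous_const.add (continuous_const.mul continuous_snd)).smul
      ((hAcont.comp continuous_fst).matrix_mulVec hwcont)
  have hccont : ∀ k, Continuous (c k) := by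
    rw [hc_def]; exact fun k => Polynomial.continuous _
  have hβmem : ∀ η ∈ Icc (-1:ℝ) 1, 1 + δ * η ∈ Icc (1-δ) (1+δ) := by
    intro η hη
    constructor <;> nlinarith [hη.1, hη.2]
  have hwx : ∀ t ∈ Icc (0:ℝ) T, ∀ η ∈ Icc (-1:ℝ) 1, w t η = x t (1 + δ * η) := by
    intro t ht η hη
    rw [hw_def]
    exact hXeq t ht _ (hβmem η hη)
  -- the ODE for `w`
  have hodew : ∀ η ∈ Icc (-1:ℝ) 1, ∀ t ∈ Icc (0:ℝ) T,
      HasDerivWithinAt (fun s => w s η) (G t η) (Icc 0 T) t := by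
    intro η hη t ht
    have h := hode _ (hβmem η hη) t ht
    have hGval : G t η = (1 + δ * η) • ((u t • Oy + v t • Ox) *ᵥ x t (1 + δ * η)) := by
      rw [hG_def, hA_def]
      simp only
      rw [hUeq t ht, hVeq t ht, hwx t ht η hη]
    rw [hGval]
    exact h.congr (fun s hs => hwx s hs η hη) (hwx t ht η hη)
  -- integral representation of `w`
  have hwηcont : ∀ η, Continuous fun s => w s η := fun η =>
    hwcont.comp (continuous_id.prodMk continuous_const)
  have hGηcont : ∀ η, Continuous fun s => G s η := fun η =>
    hGcont.comp (continuous_id.prodMk continuous_const)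
  have hwint : ∀ t ∈ Icc (0:ℝ) T, ∀ η ∈ Icc (-1:ℝ) 1,
      w t η = w 0 η + ∫ s in (0:ℝ)..t, G s η := by
    intro t ht η hη
    have hFTC := intervalIntegral.integral_eq_sub_of_hasDeriv_right_of_le ht.1
      ((hwηcont η).continuousOn)
      (fun s hs => (((hodew η hη s ⟨hs.1.le, hs.2.le.trans ht.2⟩).hasDerivAt
        (Icc_mem_nhds hs.1 (lt_of_lt_of_le hs.2 ht.2)))).hasDerivWithinAt)
      ((hGηcont η).intervalIntegrable 0 t)
    rw [hFTC]
    abel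
  -- moments via `w`
  have h11 : (-1:ℝ) ≤ 1 := by norm_num
  have hmw : ∀ k, ∀ t ∈ Icc (0:ℝ) T, m k t = δ • ∫ η in (-1:ℝ)..1, c k η • w t η := by
    intro k t ht
    rw [hm k t]
    congr 1
    refine intervalIntegral.integral_congr fun η hη => ?_
    rw [uIcc_of_le h11] at hη
    rw [hc_def]
    simp only
    rw [hwx t ht η hη]
  -- integral representation of the moments
  have h0T : (0:ℝ) ∈ Icc (0:ℝ) T := ⟨le_refl 0, hT.le⟩
  have hrep : ∀ k, ∀ t ∈ Icc (0:ℝ) T, m k t = m k 0 + ∫ s in (0:ℝ)..t, Φ k s := by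
    intro k t ht
    have hinner : Continuous fun η => ∫ s in (0:ℝ)..t, G s η :=
      intervalIntegral.continuous_parametric_intervalIntegral_of_continuous'
        (f := fun η s => G s η)
        (hGcont.comp (continuous_snd.prodMk continuous_fst)) 0 t
    have int1 : IntervalIntegrable (fun η => c k η • w 0 η) MeasureTheory.volume (-1) 1 :=
      ((hccont k).smul (hwcont.comp (continuous_const.prodMk continuous_id))).intervalIntegrable _ _
    have int2 : IntervalIntegrable (fun η => c k η • ∫ s in (0:ℝ)..t, G s η)
        MeasureTheory.volume (-1) 1 :=
      ((hccont k).smul hinner).intervalIntegrable _ _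
    calc m k t = δ • ∫ η in (-1:ℝ)..1, c k η • w t η := hmw k t ht
      _ = δ • ∫ η in (-1:ℝ)..1,
          (c k η • w 0 η + c k η • ∫ s in (0:ℝ)..t, G s η) := by
          congr 1
          refine intervalIntegral.integral_congr fun η hη => ?_
          rw [uIcc_of_le h11] at hη
          rw [hwint t ht η hη, smul_add]
      _ = δ • ((∫ η in (-1:ℝ)..1, c k η • w 0 η)
            + ∫ η in (-1:ℝ)..1, c k η • ∫ s in (0:ℝ)..t, G s η) := by
          rw [intervalIntegral.integral_add int1 int2]
      _ = m k 0 + δ • ∫ η in (-1:ℝ)..1, ∫ s in (0:ℝ)..t, c k η • G s η := by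
          rw [smul_add, hmw k 0 h0T]
          congr 2
          refine intervalIntegral.integral_congr fun η hη => ?_
          exact (intervalIntegral.integral_smul (c k η) _).symm
      _ = m k 0 + δ • ∫ s in (0:ℝ)..t, ∫ η in (-1:ℝ)..1, c k η • G s η := by
          rw [fubini_aux (fun η s => c k η • G s η)
            (((hccont k).comp continuous_fst).smul
              (hGcont.comp (continuous_snd.prodMk continuous_fst))) (-1) 1 0 t h11 ht.1]
      _ = m k 0 + ∫ s in (0:ℝ)..t, Φ k s := by
          rw [hΦ_def]
          simp only
          rw [intervalIntegral.integral_smul]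
  -- continuity of Φ
  have hΦcont : ∀ k, Continuous (Φ k) := by
    intro k
    rw [hΦ_def]
    exact (intervalIntegral.continuous_parametric_intervalIntegral_of_continuous'
      (f := fun s η => c k η • G s η)
      (((hccont k).comp continuous_snd).smul hGcont) (-1) 1).const_smul δ
  -- derivative of the moments
  have hderiv : ∀ k, ∀ t ∈ Icc (0:ℝ) T, HasDerivWithinAt (m k) (Φ k t) (Icc 0 T) t := by
    intro k t ht
    haveI : Fact (t ∈ Icc (0:ℝ) T) := ⟨ht⟩
    have h1 := intervalIntegral.integral_hasDerivWithinAt_right (a := 0)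
      (s := Icc (0:ℝ) T) (t := Icc (0:ℝ) T)
      ((hΦcont k).intervalIntegrable 0 t)
      ((hΦcont k).stronglyMeasurableAtFilter _ _)
      ((hΦcont k).continuousWithinAt)
    exact ((h1.const_add (m k 0)).congr (fun r hr => hrep k r hr) (hrep k t ht))
  constructor
  · exact fun k t ht => (hderiv k t ht).differentiableWithinAt
  · intro t ht k hk
    have hVcont : Continuous fun η => A t *ᵥ w t η :=
      continuous_const.matrix_mulVec (hwcont.comp (continuous_const.prodMk continuous_id))
    have hIint : ∀ j : ℕ, IntervalIntegrable (fun η => c j η • (A t *ᵥ w t η))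
        MeasureTheory.volume (-1) 1 := fun j =>
      ((hccont j).smul hVcont).intervalIntegrable _ _
    have hAt : u t • Oy + v t • Ox = A t := by
      rw [hA_def]; simp only; rw [hUeq t ht, hVeq t ht]
    have hI : ∀ j : ℕ, (u t • Oy + v t • Ox) *ᵥ m j t
        = δ • ∫ η in (-1:ℝ)..1, c j η • (A t *ᵥ w t η) := by
      intro j
      rw [hmw j t ht, hAt, Matrix.mulVec_smul]
      congr 1
      have hwt : Continuous fun η => w t η :=
        hwcont.comp (continuous_const.prodMk continuous_id)
      have hjint : IntervalIntegrable (fun η => c j η • w t η)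
          MeasureTheory.volume (-1) 1 := ((hccont j).smul hwt).intervalIntegrable _ _
      have hcomm := (LinearMap.toContinuousLinearMap
        (Matrix.mulVecLin (A t))).intervalIntegral_comp_comm hjint
      simp only [LinearMap.coe_toContinuousLinearMap', Matrix.mulVecLin_apply,
        Matrix.mulVec_smul] at hcomm
      exact hcomm.symm
    have key : Φ k t = (u t • Oy + v t • Ox) *ᵥ
        ((δ / 2) • (m (k - 1) t + m (k + 1) t) + m k t) := by
      have hL : Φ k t = δ • ((∫ η in (-1:ℝ)..1, c k η • (A t *ᵥ w t η))
          + (δ/2) • ((∫ η in (-1:ℝ)..1, c (k+1) η • (A t *ᵥ w t η))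
            + (∫ η in (-1:ℝ)..1, c (k-1) η • (A t *ᵥ w t η)))) := by
        rw [hΦ_def]
        simp only
        congr 1
        have hpt : ∀ η, c k η • G t η
            = c k η • (A t *ᵥ w t η)
              + (δ/2) • (c (k+1) η • (A t *ᵥ w t η) + c (k-1) η • (A t *ᵥ w t η)) := by
          intro η
          have hch : (1 + δ * η) * c k η
              = c k η + (δ/2) * (c (k+1) η + c (k-1) η) := by
            rw [hc_def]
            exact cheb_aux k hk δ η
          rw [hG_def]
          simp only
          rw [smul_smul, mul_comm (c k η) _, hch]
          module
        rw [intervalIntegral.integral_congr (fun η _ => hpt η),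
          intervalIntegral.integral_add (hIint k)
            (show IntervalIntegrable (fun η => (δ/2) • (c (k+1) η • (A t *ᵥ w t η)
                + c (k-1) η • (A t *ᵥ w t η))) MeasureTheory.volume (-1) 1 from
              (((((hccont (k+1)).smul hVcont).add
              ((hccont (k-1)).smul hVcont)).const_smul (δ/2)).intervalIntegrable (-1) 1)),
          intervalIntegral.integral_smul,
          intervalIntegral.integral_add (hIint (k+1)) (hIint (k-1))]
      have hR : (u t • Oy + v t • Ox) *ᵥ
            ((δ / 2) • (m (k - 1) t + m (k + 1) t) + m k t)
          = (δ/2) • ((δ • ∫ η in (-1:ℝ)..1, c (k-1) η • (A t *ᵥ w t η))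
              + (δ • ∫ η in (-1:ℝ)..1, c (k+1) η • (A t *ᵥ w t η)))
            + δ • ∫ η in (-1:ℝ)..1, c k η • (A t *ᵥ w t η) := by
        rw [Matrix.mulVec_add, Matrix.mulVec_smul, Matrix.mulVec_add, hI, hI, hI]
      rw [hL, hR]
      module
    exact key ▸ hderiv k t ht
end
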